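/- Let (M,d) be a locally compact, complete metric space and let C ⊆ M be a closed set satisfying the cusp condition with respect to d. Let U ⊆ M be open and let φ : U → ℝⁿ be a homeomorphism onto ℝⁿ such that both φ and φ⁻¹ are locally bi-Lipschitz (with respect to the restriction of d to U and the Euclidean metric on ℝⁿ). Then φ(C ∩ U) is a closed subset of ℝⁿ satisfying the cusp condition with respect to the Euclidean metric. -/

import Mathlib

open Set Metric

/-- A closed set `F` in a topological space, equipped with a distance function `d`, has
at worst polynomial outward cusps (with respect to `d`). -/
def HasPolyOutwardCusps {M : Type*} [TopologicalSpace M] (d : M → M → ℝ) (F : Set M) : Prop :=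
  ∀ K : Set M, IsCompact K → ∃ ε₀ ρ r : ℝ, 0 < ε₀ ∧ 0 < ρ ∧ 1 ≤ r ∧
    ∀ z ∈ K ∩ frontier F, ∀ ε : ℝ, 0 < ε → ε < ε₀ →
      ∃ x ∈ F, d x z < ε ∧ ∀ y : M, d x y < ρ * ε ^ r → y ∈ F ∧ d z y < ε

/-- Sums over partitions `0 = t₀ ≤ ⋯ ≤ tₙ = 1` of `[0,1]` for a path `γ` and distance `d`. -/
def partitionSums {M : Type*} (d : M → M → ℝ) (γ : ℝ → M) : Set ℝ :=
  { L | ∃ (n : ℕ) (t : Fin (n + 1) → ℝ), Monotone t ∧ t 0 = 0 ∧ t (Fin.last n) = 1 ∧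
      L = ∑ i : Fin n, d (γ (t i.castSucc)) (γ (t i.succ)) }

/-- Total-variation length of a path `γ : [0,1] → M` with respect to `d`. -/
noncomputable def pathLength {M : Type*} (d : M → M → ℝ) (γ : ℝ → M) : ℝ :=
  sSup (partitionSums d γ)

/-- A path is rectifiable w.r.t. `d` if its total variation is finite. -/
def IsRectifiable {M : Type*} (d : M → M → ℝ) (γ : ℝ → M) : Prop :=
  BddAbove (partitionSums d γ)

/-- The "no narrow fjords" condition for a closed set `F` with respect to `d`. -/
def NoNarrowFjords {M : Type*} [TopologicalSpace M] (d : M → M → ℝ) (F : Set M) : Prop :=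
  ∀ x ∈ F, ∃ (p : ℕ) (K : Set M) (D : ℝ), 1 ≤ p ∧ IsCompact K ∧ K ⊆ F ∧
    K ∈ nhdsWithin x F ∧ 0 < D ∧
    ∀ y ∈ K, ∀ z ∈ K, ∃ γ : ℝ → M,
      ContinuousOn γ (Icc (0 : ℝ) 1) ∧ γ 0 = y ∧ γ 1 = z ∧
      (∀ t ∈ Icc (0 : ℝ) 1, γ t ∈ F) ∧
      IsRectifiable d γ ∧
      (∃ S : Finset M, ∀ t ∈ Icc (0 : ℝ) 1, γ t ∉ S → γ t ∈ interior F) ∧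
      d y z ≥ D * pathLength d γ ^ p

/-- The cusp condition: at worst polynomial outward cusps and no narrow fjords. -/
def CuspCondition {M : Type*} [TopologicalSpace M] (d : M → M → ℝ) (F : Set M) : Prop :=
  HasPolyOutwardCusps d F ∧ NoNarrowFjords d F

section helpers
variable {X : Type*} [MetricSpace X] (γ : ℝ → X)

lemma mem_partitionSums_pair :
    dist (γ 0) (γ 1) ∈ partitionSums (fun a b => dist a b) γ := by
  refine ⟨1, fun i => ((i : ℕ) : ℝ), ?_, by simp, by simp [Fin.last], ?_⟩
  · intro i j h
    exact_mod_cast Nat.cast_le.mpr (Fin.le_def.mp h)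
  · simp [Fin.sum_univ_one]

lemma mem_partitionSums_triple {s : ℝ} (hs : s ∈ Icc (0:ℝ) 1) :
    dist (γ 0) (γ s) + dist (γ s) (γ 1) ∈ partitionSums (fun a b => dist a b) γ := by
  refine ⟨2, ![0, s, 1], ?_, by simp, by simp [Fin.last], ?_⟩
  · intro i j hij
    fin_cases i <;> fin_cases j <;>
      simp_all [Fin.le_def] <;> first | linarith [hs.1, hs.2] | omega
  · simp [Fin.sum_univ_two]

lemma partitionSums_nonempty : (partitionSums (fun a b => dist a b) γ).Nonempty :=
  ⟨_, mem_partitionSums_pair γ⟩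

lemma pathLength_nonneg (h : IsRectifiable (fun a b => dist a b) γ) :
    0 ≤ pathLength (fun a b => dist a b) γ :=
  le_trans dist_nonneg (le_csSup h (mem_partitionSums_pair γ))

lemma dist_le_pathLength (h : IsRectifiable (fun a b => dist a b) γ) {s : ℝ}
    (hs : s ∈ Icc (0:ℝ) 1) :
    dist (γ 0) (γ s) ≤ pathLength (fun a b => dist a b) γ := by
  have h1 := le_csSup h (mem_partitionSums_triple γ hs)
  have h2 : (0:ℝ) ≤ dist (γ s) (γ 1) := dist_nonneg
  unfold pathLength at *; linarith

lemma pathLength_comp_le {Y : Type*} [MetricSpace Y] (f : X → Y) (A : Set X)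
    (hA : ∀ t ∈ Icc (0:ℝ) 1, γ t ∈ A) (L : ℝ) (hL : 0 ≤ L)
    (hf : ∀ a ∈ A, ∀ b ∈ A, dist (f a) (f b) ≤ L * dist a b)
    (hrect : IsRectifiable (fun a b => dist a b) γ) :
    IsRectifiable (fun a b => dist a b) (f ∘ γ) ∧
      pathLength (fun a b => dist a b) (f ∘ γ) ≤ L * pathLength (fun a b => dist a b) γ := by
  have key : ∀ Lv ∈ partitionSums (fun a b => dist a b) (f ∘ γ),
      Lv ≤ L * pathLength (fun a b => dist a b) γ := by
    rintro _ ⟨m, t, hmono, ht0, ht1, rfl⟩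
    have hti : ∀ i : Fin (m+1), t i ∈ Icc (0:ℝ) 1 := fun i =>
      ⟨ht0 ▸ hmono (Fin.zero_le i), ht1 ▸ hmono (Fin.le_last i)⟩
    calc ∑ i : Fin m, dist ((f ∘ γ) (t i.castSucc)) ((f ∘ γ) (t i.succ))
        ≤ ∑ i : Fin m, L * dist (γ (t i.castSucc)) (γ (t i.succ)) :=
          Finset.sum_le_sum fun i _ => hf _ (hA _ (hti _)) _ (hA _ (hti _))
      _ = L * ∑ i : Fin m, dist (γ (t i.castSucc)) (γ (t i.succ)) := by
          rw [Finset.mul_sum]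
      _ ≤ L * pathLength (fun a b => dist a b) γ :=
          mul_le_mul_of_nonneg_left (le_csSup hrect ⟨m, t, hmono, ht0, ht1, rfl⟩) hL
  exact ⟨⟨_, key⟩, csSup_le (partitionSums_nonempty _) key⟩

end helpers

lemma exists_uniform_biLipschitz {X Y : Type*} [MetricSpace X] [MetricSpace Y]
    (f : X → Y) (U S : Set X) (hS : IsCompact S) (hSU : S ⊆ U)
    (h : ∀ x ∈ U, ∃ (V : Set X) (K : ℝ), V ∈ nhds x ∧ V ⊆ U ∧ 1 ≤ K ∧
      ∀ a ∈ V, ∀ b ∈ V,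
        K⁻¹ * dist a b ≤ dist (f a) (f b) ∧ dist (f a) (f b) ≤ K * dist a b) :
    ∃ δ L : ℝ, 0 < δ ∧ 1 ≤ L ∧ ∀ a ∈ S, ∀ b : X, dist a b < δ → b ∈ U ∧
      L⁻¹ * dist a b ≤ dist (f a) (f b) ∧ dist (f a) (f b) ≤ L * dist a b := by
  classical
  have key : ∀ x : X, ∃ (r K : ℝ), 0 < r ∧ 1 ≤ K ∧ (x ∈ S →
      (ball x (2 * r) ⊆ U ∧ ∀ a ∈ ball x (2 * r), ∀ b ∈ ball x (2 * r),
        K⁻¹ * dist a b ≤ dist (f a) (f b) ∧ dist (f a) (f b) ≤ K * dist a b)) := by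
    intro x
    by_cases hx : x ∈ S
    · obtain ⟨V, K, hV, hVU, hK, hb⟩ := h x (hSU hx)
      obtain ⟨ε, hε, hball⟩ := Metric.mem_nhds_iff.mp hV
      refine ⟨ε / 2, K, by linarith, hK, fun _ => ⟨?_, fun a ha b hb' => hb a ?_ b ?_⟩⟩
      · intro y hy
        exact hVU (hball (by simpa [mem_ball] using by rw [mem_ball] at hy; linarith))
      · exact hball (by rw [mem_ball] at ha ⊢; linarith)
      · exact hball (by rw [mem_ball] at hb' ⊢; linarith)
    · exact ⟨1, 1, one_pos, le_refl 1, fun hx' => absurd hx' hx⟩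
  choose r K hr hK hprop using key
  obtain ⟨t, ht₁, ht₂⟩ := hS.elim_nhds_subcover (fun x => ball x (r x))
    (fun x _ => ball_mem_nhds x (hr x))
  rcases Set.eq_empty_or_nonempty S with hemp | hne
  · exact ⟨1, 1, one_pos, le_refl 1, fun a ha => absurd ha (by simp [hemp])⟩
  · obtain ⟨a₀, ha₀⟩ := hne
    have htne : t.Nonempty := by
      rcases Set.mem_iUnion₂.mp (ht₂ ha₀) with ⟨x, hx, _⟩
      exact ⟨x, hx⟩
    refine ⟨t.inf' htne r, t.sup' htne K, ?_, ?_, ?_⟩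
    · exact (Finset.lt_inf'_iff _).mpr fun b hb => hr b
    · obtain ⟨x₀, hx₀⟩ := htne
      exact le_trans (hK x₀) (Finset.le_sup' K hx₀)
    · intro a ha b hab
      rcases Set.mem_iUnion₂.mp (ht₂ ha) with ⟨x, hx, hax⟩
      have hrx : t.inf' htne r ≤ r x := Finset.inf'_le r hx
      have hKx : K x ≤ t.sup' htne K := Finset.le_sup' K hx
      have haxb : a ∈ ball x (2 * r x) := by
        rw [mem_ball] at hax ⊢; linarith [hr x]
      have hbxb : b ∈ ball x (2 * r x) := by
        rw [mem_ball] at hax ⊢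
        calc dist b x ≤ dist b a + dist a x := dist_triangle _ _ _
          _ < t.inf' htne r + r x := by rw [dist_comm b a]; linarith
          _ ≤ 2 * r x := by linarith
      obtain ⟨hU', hb'⟩ := hprop x (ht₁ x hx)
      obtain ⟨hlow, hhigh⟩ := hb' a haxb b hbxb
      have hKxpos : (0:ℝ) < K x := lt_of_lt_of_le one_pos (hK x)
      have hLpos : (0:ℝ) < t.sup' htne K := lt_of_lt_of_le hKxpos hKx
      refine ⟨hU' hbxb, le_trans ?_ hlow, le_trans hhigh ?_⟩
      · exact mul_le_mul_of_nonneg_right (inv_anti₀ hKxpos hKx) dist_nonneg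
      · exact mul_le_mul_of_nonneg_right hKx dist_nonneg

lemma cusp_arith {D L x y w : ℝ} (hD : 0 < D) (hL : 1 ≤ L) (p : ℕ)
    (hx : 0 ≤ x) (hy : 0 ≤ y) (hxy : x ≤ L * y)
    (h2 : D * y ^ p ≤ w) : D / L ^ (p + 1) * x ^ p ≤ L⁻¹ * w := by
  have hL0 : (0:ℝ) < L := lt_of_lt_of_le one_pos hL
  have hxp : x ^ p ≤ L ^ p * y ^ p := by
    rw [← mul_pow]; exact pow_le_pow_left₀ hx hxy p
  have e1 : D / L ^ (p + 1) * x ^ p ≤ D / L ^ (p + 1) * (L ^ p * y ^ p) :=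
    mul_le_mul_of_nonneg_left hxp (by positivity)
  have e2 : D / L ^ (p + 1) * (L ^ p * y ^ p) = L⁻¹ * (D * y ^ p) := by
    rw [pow_succ]
    field_simp
  have e3 : L⁻¹ * (D * y ^ p) ≤ L⁻¹ * w := mul_le_mul_of_nonneg_left h2 (by positivity)
  linarith

/-- If `C ⊆ M` is closed and satisfies the cusp condition in a locally compact complete
metric space `M`, and `φ : U → ℝⁿ` is a homeomorphism from an open set `U ⊆ M` onto `ℝⁿ`
such that `φ` and its inverse `ψ` are locally bi-Lipschitz, then `φ(C ∩ U)` is a closed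
subset of `ℝⁿ` satisfying the cusp condition for the Euclidean metric. -/
theorem cuspCondition_image_of_locally_biLipschitz_chart
    {M : Type*} [MetricSpace M] [LocallyCompactSpace M] [CompleteSpace M]
    (C U : Set M) (hC : IsClosed C)
    (hcusp : CuspCondition (fun a b => dist a b) C)
    (hU : IsOpen U) {n : ℕ}
    (φ : M → EuclideanSpace ℝ (Fin n)) (ψ : EuclideanSpace ℝ (Fin n) → M)
    (hφcont : ContinuousOn φ U) (hψcont : Continuous ψ)
    (hψU : ∀ p, ψ p ∈ U)
    (hinv₁ : ∀ x ∈ U, ψ (φ x) = x) (hinv₂ : ∀ p, φ (ψ p) = p)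
    (hφlip : ∀ x ∈ U, ∃ (V : Set M) (K : ℝ), V ∈ nhds x ∧ V ⊆ U ∧ 1 ≤ K ∧
      ∀ a ∈ V, ∀ b ∈ V,
        K⁻¹ * dist a b ≤ dist (φ a) (φ b) ∧ dist (φ a) (φ b) ≤ K * dist a b)
    (hψlip : ∀ p : EuclideanSpace ℝ (Fin n),
      ∃ (W : Set (EuclideanSpace ℝ (Fin n))) (K : ℝ), W ∈ nhds p ∧ 1 ≤ K ∧
      ∀ a ∈ W, ∀ b ∈ W,
        K⁻¹ * dist a b ≤ dist (ψ a) (ψ b) ∧ dist (ψ a) (ψ b) ≤ K * dist a b) :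
    IsClosed (φ '' (C ∩ U)) ∧
      CuspCondition (fun a b => dist a b) (φ '' (C ∩ U)) := by
  classical
  have himg : φ '' (C ∩ U) = ψ ⁻¹' C := by
    apply Set.Subset.antisymm
    · rintro _ ⟨x, ⟨hxC, hxU⟩, rfl⟩
      show ψ (φ x) ∈ C
      rw [hinv₁ x hxU]; exact hxC
    · intro p hp
      exact ⟨ψ p, ⟨hp, hψU p⟩, hinv₂ p⟩
  rw [himg]
  have hF'closed : IsClosed (ψ ⁻¹' C) := hC.preimage hψcont
  have hfr : ∀ w, w ∈ frontier (ψ ⁻¹' C) → ψ w ∈ frontier C := by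
    intro w hw
    rw [hC.frontier_eq]
    refine ⟨hF'closed.frontier_subset hw, ?_⟩
    intro hcon
    have hsub : ψ ⁻¹' interior C ⊆ interior (ψ ⁻¹' C) :=
      interior_maximal (Set.preimage_mono interior_subset) (isOpen_interior.preimage hψcont)
    exact hw.2 (hsub hcon)
  refine ⟨hF'closed, ?_, ?_⟩
  · -- HasPolyOutwardCusps
    intro Kc hKc
    have hScomp : IsCompact (ψ '' Kc) := hKc.image hψcont
    have hSU : ψ '' Kc ⊆ U := by rintro _ ⟨p, _, rfl⟩; exact hψU p
    obtain ⟨δφ, Lφ, hδφ, hLφ, hφb⟩ := exists_uniform_biLipschitz φ U (ψ '' Kc) hScomp hSU hφlip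
    have hψlip' : ∀ x ∈ (univ : Set (EuclideanSpace ℝ (Fin n))),
        ∃ (V : Set (EuclideanSpace ℝ (Fin n))) (K : ℝ), V ∈ nhds x ∧ V ⊆ univ ∧ 1 ≤ K ∧
        ∀ a ∈ V, ∀ b ∈ V,
          K⁻¹ * dist a b ≤ dist (ψ a) (ψ b) ∧ dist (ψ a) (ψ b) ≤ K * dist a b := by
      intro p _
      obtain ⟨W, K, hW, hK, hb⟩ := hψlip p
      exact ⟨W, K, hW, subset_univ _, hK, hb⟩
    obtain ⟨δψ, Lψ, hδψ, hLψ, hψb⟩ := exists_uniform_biLipschitz ψ univ (cthickening 1 Kc)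
      hKc.cthickening (subset_univ _) hψlip'
    obtain ⟨ε₀, ρ, r, hε₀, hρ, hr, hcusps⟩ := hcusp.1 (ψ '' Kc) hScomp
    have hLφpos : (0:ℝ) < Lφ := lt_of_lt_of_le one_pos hLφ
    have hLψpos : (0:ℝ) < Lψ := lt_of_lt_of_le one_pos hLψ
    have h2Lφ : (0:ℝ) < 2 * Lφ := by linarith
    have h2Lφr : (0:ℝ) < (2 * Lφ) ^ r := Real.rpow_pos_of_pos h2Lφ r
    refine ⟨min (min ε₀ δφ) 1, min (ρ / (2 * Lψ * (2 * Lφ) ^ r)) (min δψ (1/2)), r,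
      lt_min (lt_min hε₀ hδφ) one_pos, lt_min (by positivity) (lt_min hδψ (by norm_num)), hr, ?_⟩
    rintro z' ⟨hz'K, hz'fr⟩ ε hε hεlt
    have hεε₀ : ε < ε₀ := lt_of_lt_of_le hεlt (le_trans (min_le_left _ _) (min_le_left _ _))
    have hεδφ : ε < δφ := lt_of_lt_of_le hεlt (le_trans (min_le_left _ _) (min_le_right _ _))
    have hεone : ε < 1 := lt_of_lt_of_le hεlt (min_le_right _ _)
    have hzS : ψ z' ∈ ψ '' Kc := mem_image_of_mem ψ hz'K
    have hzfr : ψ z' ∈ frontier C := hfr z' hz'fr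
    have hε₁pos : 0 < ε / (2 * Lφ) := div_pos hε h2Lφ
    have hε₁le : ε / (2 * Lφ) ≤ ε / 2 := by
      apply div_le_div_of_nonneg_left hε.le two_pos (by linarith)
    obtain ⟨x, hxC, hxz, hxball⟩ := hcusps (ψ z') ⟨hzS, hzfr⟩ (ε / (2 * Lφ)) hε₁pos
      (by linarith)
    have hzx : dist (ψ z') x < δφ := by
      rw [dist_comm]; linarith
    obtain ⟨hxU, _, hhigh⟩ := hφb (ψ z') hzS x hzx
    have hφz : φ (ψ z') = z' := hinv₂ z'
    have hx'z' : dist (φ x) z' < ε / 2 := by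
      rw [dist_comm, ← hφz]
      calc dist (φ (ψ z')) (φ x) ≤ Lφ * dist (ψ z') x := hhigh
        _ < Lφ * (ε / (2 * Lφ)) := by
            apply mul_lt_mul_of_pos_left _ hLφpos
            rw [dist_comm]; exact hxz
        _ = ε / 2 := by field_simp
    refine ⟨φ x, ?_, ?_, ?_⟩
    · show ψ (φ x) ∈ C
      rw [hinv₁ x hxU]; exact hxC
    · linarith
    · intro y' hy'
      set ρ' := min (ρ / (2 * Lψ * (2 * Lφ) ^ r)) (min δψ (1/2)) with hρ'def
      have hρ'pos : 0 < ρ' := lt_min (by positivity) (lt_min hδψ (by norm_num))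
      have hρ'le₁ : ρ' ≤ ρ / (2 * Lψ * (2 * Lφ) ^ r) := min_le_left _ _
      have hρ'δψ : ρ' ≤ δψ := le_trans (min_le_right _ _) (min_le_left _ _)
      have hρ'half : ρ' ≤ 1/2 := le_trans (min_le_right _ _) (min_le_right _ _)
      have hεr_le1 : ε ^ r ≤ 1 := Real.rpow_le_one hε.le hεone.le (by linarith)
      have hεr_le_ε : ε ^ r ≤ ε := by
        calc ε ^ r ≤ ε ^ (1:ℝ) := Real.rpow_le_rpow_of_exponent_ge hε hεone.le hr
          _ = ε := Real.rpow_one ε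
      have hεrpos : 0 < ε ^ r := Real.rpow_pos_of_pos hε r
      set E := ε ^ r with hEdef
      set A := (2 * Lφ) ^ r with hAdef
      have hApos : (0:ℝ) < A := h2Lφr
      have hy'δψ : dist (φ x) y' < δψ := by
        have : ρ' * E ≤ ρ' := mul_le_of_le_one_right hρ'pos.le hεr_le1
        linarith
      have hx'Kq : φ x ∈ cthickening 1 Kc :=
        mem_cthickening_of_dist_le (φ x) z' 1 Kc hz'K (by linarith)
      obtain ⟨-, _, hhigh2⟩ := hψb (φ x) hx'Kq y' hy'δψ
      have hψφx : ψ (φ x) = x := hinv₁ x hxU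
      have hε₁r : (ε / (2 * Lφ)) ^ r = E / A :=
        Real.div_rpow hε.le h2Lφ.le r
      have hLψne : Lψ ≠ 0 := ne_of_gt hLψpos
      have hAne : A ≠ 0 := ne_of_gt hApos
      have hxy : dist x (ψ y') < ρ * (ε / (2 * Lφ)) ^ r := by
        have h1 : dist (ψ (φ x)) (ψ y') ≤ Lψ * dist (φ x) y' := hhigh2
        rw [hψφx] at h1
        have h2 : Lψ * dist (φ x) y' < Lψ * (ρ' * E) :=
          mul_lt_mul_of_pos_left hy' hLψpos
        have h3a : ρ' * E ≤ ρ / (2 * Lψ * A) * E :=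
          mul_le_mul_of_nonneg_right hρ'le₁ hεrpos.le
        have h3b : Lψ * (ρ' * E) ≤ Lψ * (ρ / (2 * Lψ * A) * E) :=
          mul_le_mul_of_nonneg_left h3a hLψpos.le
        have h3c : Lψ * (ρ / (2 * Lψ * A) * E) = ρ * E / (2 * A) := by
          field_simp
        have h4 : ρ * E / (2 * A) ≤ ρ * E / A := by
          apply div_le_div_of_nonneg_left (by positivity) hApos (by linarith)
        have h4b : ρ * (E / A) = ρ * E / A := (mul_div_assoc ρ E A).symm
        rw [hε₁r, h4b]
        linarith
      obtain ⟨hyC, _⟩ := hxball (ψ y') hxy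
      refine ⟨hyC, ?_⟩
      have h5 : ρ' * E ≤ ε / 2 := by nlinarith [hεrpos.le, hρ'pos.le]
      calc dist z' y' ≤ dist z' (φ x) + dist (φ x) y' := dist_triangle _ _ _
        _ < ε / 2 + ε / 2 := by rw [dist_comm z' (φ x)]; linarith
        _ = ε := by ring
  · -- NoNarrowFjords
    intro x' hx'
    have hxU' : ψ x' ∈ U := hψU x'
    obtain ⟨p, K, D, hp, hKcomp, hKC, hKnhds, hD, hpaths⟩ := hcusp.2 (ψ x') hx'
    obtain ⟨V, L, hV, hVU, hL, hVb⟩ := hφlip (ψ x') hxU'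
    have hLpos : (0:ℝ) < L := lt_of_lt_of_le one_pos hL
    obtain ⟨ε, hε, hball⟩ := Metric.mem_nhds_iff.mp hV
    set s := ε / 2 with hsdef
    have hspos : 0 < s := by positivity
    have hsV : closedBall (ψ x') s ⊆ V := fun w hw => hball (by
      rw [mem_closedBall] at hw; rw [mem_ball]; linarith)
    obtain ⟨O, hOopen, hxO, hOK⟩ := mem_nhdsWithin.mp hKnhds
    set t0 := min (s/2) (D * (s/2)^p / 2) with ht0def
    have ht0pos : 0 < t0 := lt_min (by linarith) (by positivity)
    have ht0s : t0 ≤ s/2 := min_le_left _ _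
    have ht0D : t0 ≤ D * (s/2)^p / 2 := min_le_right _ _
    set K₀ := K ∩ closedBall (ψ x') t0 with hK₀def
    have hK₀comp : IsCompact K₀ := hKcomp.inter_right isClosed_closedBall
    have hK₀C : K₀ ⊆ C := fun w hw => hKC hw.1
    have hK₀V : K₀ ⊆ V := fun w hw =>
      hsV (closedBall_subset_closedBall (by linarith) hw.2)
    have hK₀U : K₀ ⊆ U := fun w hw => hVU (hK₀V hw)
    refine ⟨p, φ '' K₀, D / L^(p+1), hp, ?_, ?_, ?_, by positivity, ?_⟩
    · exact hK₀comp.image_of_continuousOn (hφcont.mono hK₀U)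
    · rintro _ ⟨w, hw, rfl⟩
      show ψ (φ w) ∈ C
      rw [hinv₁ w (hK₀U hw)]; exact hK₀C hw
    · rw [mem_nhdsWithin]
      refine ⟨ψ ⁻¹' (O ∩ ball (ψ x') t0), (hOopen.inter isOpen_ball).preimage hψcont,
        ⟨hxO, mem_ball_self ht0pos⟩, ?_⟩
      rintro q ⟨hq1, hq2⟩
      exact ⟨ψ q, ⟨hOK ⟨hq1.1, hq2⟩, ball_subset_closedBall hq1.2⟩, hinv₂ q⟩
    · rintro y' ⟨wy, hwy, rfl⟩ z' ⟨wz, hwz, rfl⟩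
      obtain ⟨γ, hγcont, hγ0, hγ1, hγC, hγrect, ⟨Sf, hSf⟩, hγlen'⟩ :=
        hpaths wy hwy.1 wz hwz.1
      have hγlen : D * pathLength (fun a b => dist a b) γ ^ p ≤ dist wy wz := hγlen'
      set ℓ := pathLength (fun a b => dist a b) γ with hℓdef
      have hℓ0 : 0 ≤ ℓ := pathLength_nonneg γ hγrect
      have hwyx : dist wy (ψ x') ≤ t0 := hwy.2
      have hwzx : dist wz (ψ x') ≤ t0 := hwz.2
      have hyz2t : dist wy wz ≤ 2 * t0 := by
        calc dist wy wz ≤ dist wy (ψ x') + dist (ψ x') wz := dist_triangle _ _ _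
          _ ≤ t0 + t0 := by rw [dist_comm (ψ x') wz]; linarith
          _ = 2 * t0 := by ring
      have hℓp : ℓ^p ≤ (s/2)^p := by nlinarith
      have hℓs : ℓ ≤ s/2 := by
        have hppos : p ≠ 0 := by omega
        exact (pow_le_pow_iff_left₀ hℓ0 (by positivity) hppos).mp hℓp
      have hγball : ∀ u ∈ Icc (0:ℝ) 1, γ u ∈ closedBall (ψ x') s := by
        intro u hu
        have h1 : dist (γ 0) (γ u) ≤ ℓ := dist_le_pathLength γ hγrect hu
        rw [mem_closedBall]
        calc dist (γ u) (ψ x') ≤ dist (γ u) (γ 0) + dist (γ 0) (ψ x') := dist_triangle _ _ _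
          _ ≤ ℓ + t0 := by
              have h1' : dist wy (γ u) ≤ ℓ := hγ0 ▸ h1
              rw [hγ0, dist_comm (γ u) wy]; linarith
          _ ≤ s := by linarith
      have hγV : ∀ u ∈ Icc (0:ℝ) 1, γ u ∈ V := fun u hu => hsV (hγball u hu)
      have hγU : ∀ u ∈ Icc (0:ℝ) 1, γ u ∈ U := fun u hu => hVU (hγV u hu)
      have hfUB : ∀ a ∈ closedBall (ψ x') s, ∀ b ∈ closedBall (ψ x') s,
          dist (φ a) (φ b) ≤ L * dist a b := fun a ha b hb => (hVb a (hsV ha) b (hsV hb)).2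
      obtain ⟨hrect', hlen'⟩ := pathLength_comp_le γ φ (closedBall (ψ x') s) hγball L
        hLpos.le hfUB hγrect
      refine ⟨φ ∘ γ, ?_, ?_, ?_, ?_, hrect', ?_, ?_⟩
      · exact hφcont.comp hγcont (fun u hu => hγU u hu)
      · show φ (γ 0) = φ wy
        rw [hγ0]
      · show φ (γ 1) = φ wz
        rw [hγ1]
      · intro u hu
        show ψ (φ (γ u)) ∈ C
        rw [hinv₁ _ (hγU u hu)]; exact hγC u hu
      · refine ⟨Sf.image φ, ?_⟩
        intro u hu hnot
        have hnS : γ u ∉ Sf := fun hmem => hnot (Finset.mem_image_of_mem φ hmem)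
        have hintC : γ u ∈ interior C := hSf u hu hnS
        have hsub : ψ ⁻¹' interior C ⊆ interior (ψ ⁻¹' C) :=
          interior_maximal (Set.preimage_mono interior_subset) (isOpen_interior.preimage hψcont)
        apply hsub
        show ψ (φ (γ u)) ∈ interior C
        rw [hinv₁ _ (hγU u hu)]; exact hintC
      · show dist (φ wy) (φ wz) ≥ D / L^(p+1) * pathLength (fun a b => dist a b) (φ ∘ γ) ^ p
        have h1 : L⁻¹ * dist wy wz ≤ dist (φ wy) (φ wz) := (hVb wy (hK₀V hwy) wz (hK₀V hwz)).1
        have h4 : 0 ≤ pathLength (fun a b => dist a b) (φ ∘ γ) := pathLength_nonneg _ hrect'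
        exact le_trans (cusp_arith hD hL p h4 hℓ0 hlen' hγlen) h1
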